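/- Let D = {(τ,ϑ) ∈ ℝ² : 1 < cosh τ < √2}, and define x : D → ℝ³ by x(τ,ϑ) = (F(τ), cosh τ · cosh ϑ, cosh τ · sinh ϑ) where F(τ) = ∫₀^τ √(2 − cosh² t) dt. Then for all (τ,ϑ) ∈ D the partial derivatives satisfy ⟨∂_τ x, ∂_τ x⟩₁ = 1, ⟨∂_τ x, ∂_ϑ x⟩₁ = 0, and ⟨∂_ϑ x, ∂_ϑ x⟩₁ = −cosh² τ. Thus x is an isometric immersion into 𝕃³ of the constant curvature K = −1 metric ds² = dτ² − cosh²τ dϑ². -/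

import Mathlib

/-- The Minkowski bilinear form of index 1 on `ℝ³`: `⟨x,y⟩₁ = x₁y₁ + x₂y₂ − x₃y₃`. -/
def minkowskiForm (x y : ℝ × ℝ × ℝ) : ℝ :=
  x.1 * y.1 + x.2.1 * y.2.1 - x.2.2 * y.2.2

/-- The parametrization `x(τ,ϑ) = (∫₀^τ √(2 − cosh²t) dt, cosh τ cosh ϑ, cosh τ sinh ϑ)`. -/
noncomputable def xKnegL3time : ℝ × ℝ → ℝ × ℝ × ℝ := fun p =>
  (∫ t in (0 : ℝ)..p.1, Real.sqrt (2 - Real.cosh t ^ 2),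
    Real.cosh p.1 * Real.cosh p.2, Real.cosh p.1 * Real.sinh p.2)

lemma xKneg_deriv_tau (τ ϑ : ℝ) :
    deriv (fun t => xKnegL3time (t, ϑ)) τ =
      (Real.sqrt (2 - Real.cosh τ ^ 2), Real.sinh τ * Real.cosh ϑ,
        Real.sinh τ * Real.sinh ϑ) := by
  have hcont : Continuous fun t : ℝ => Real.sqrt (2 - Real.cosh t ^ 2) :=
    Real.continuous_sqrt.comp (by continuity)
  have h1 : HasDerivAt (fun t : ℝ => ∫ s in (0:ℝ)..t, Real.sqrt (2 - Real.cosh s ^ 2))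
      (Real.sqrt (2 - Real.cosh τ ^ 2)) τ :=
    intervalIntegral.integral_hasDerivAt_right (hcont.intervalIntegrable 0 τ)
      hcont.aestronglyMeasurable.stronglyMeasurableAtFilter hcont.continuousAt
  have h2 : HasDerivAt (fun t : ℝ => Real.cosh t * Real.cosh ϑ)
      (Real.sinh τ * Real.cosh ϑ) τ := (Real.hasDerivAt_cosh τ).mul_const _
  have h3 : HasDerivAt (fun t : ℝ => Real.cosh t * Real.sinh ϑ)
      (Real.sinh τ * Real.sinh ϑ) τ := (Real.hasDerivAt_cosh τ).mul_const _
  exact ((h1.prodMk (h2.prodMk h3)).congr_deriv rfl).deriv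

lemma xKneg_deriv_theta (τ ϑ : ℝ) :
    deriv (fun t => xKnegL3time (τ, t)) ϑ =
      ((0 : ℝ), Real.cosh τ * Real.sinh ϑ, Real.cosh τ * Real.cosh ϑ) := by
  have h1 : HasDerivAt (fun _ : ℝ => ∫ s in (0:ℝ)..τ, Real.sqrt (2 - Real.cosh s ^ 2))
      (0 : ℝ) ϑ := hasDerivAt_const _ _
  have h2 : HasDerivAt (fun t : ℝ => Real.cosh τ * Real.cosh t)
      (Real.cosh τ * Real.sinh ϑ) ϑ := (Real.hasDerivAt_cosh ϑ).const_mul _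
  have h3 : HasDerivAt (fun t : ℝ => Real.cosh τ * Real.sinh t)
      (Real.cosh τ * Real.cosh ϑ) ϑ := (Real.hasDerivAt_sinh ϑ).const_mul _
  exact (h1.prodMk (h2.prodMk h3)).deriv

/-- On `D = {(τ,ϑ) : 1 < cosh τ < √2}` the map `xKnegL3time` is an isometric
immersion into `𝕃³` of the metric `ds² = dτ² − cosh²τ dϑ²` (K = −1). -/
theorem Kneg_immersion_L3_timelike (τ ϑ : ℝ)
    (hτ₁ : 1 < Real.cosh τ) (hτ₂ : Real.cosh τ < Real.sqrt 2) :
    minkowskiForm (deriv (fun t => xKnegL3time (t, ϑ)) τ)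
        (deriv (fun t => xKnegL3time (t, ϑ)) τ) = 1 ∧
    minkowskiForm (deriv (fun t => xKnegL3time (t, ϑ)) τ)
        (deriv (fun t => xKnegL3time (τ, t)) ϑ) = 0 ∧
    minkowskiForm (deriv (fun t => xKnegL3time (τ, t)) ϑ)
        (deriv (fun t => xKnegL3time (τ, t)) ϑ) = -Real.cosh τ ^ 2 := by
  have hle : (0:ℝ) ≤ 2 - Real.cosh τ ^ 2 := by
    have h2 : Real.cosh τ ^ 2 < 2 := by
      have := sq_lt_sq' (by linarith [Real.cosh_pos (x := τ)]) hτ₂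
      simpa [Real.sq_sqrt (by norm_num : (2:ℝ) ≥ 0)] using this
    linarith
  have hsq : Real.sqrt (2 - Real.cosh τ ^ 2) * Real.sqrt (2 - Real.cosh τ ^ 2)
      = 2 - Real.cosh τ ^ 2 := Real.mul_self_sqrt hle
  have hid := Real.cosh_sq_sub_sinh_sq τ
  rw [xKneg_deriv_tau, xKneg_deriv_theta]
  refine ⟨?_, ?_, ?_⟩ <;> simp only [minkowskiForm] <;> nlinarith [Real.cosh_sq_sub_sinh_sq τ, Real.cosh_sq_sub_sinh_sq ϑ, sq_nonneg (Real.sinh τ), sq_nonneg (Real.cosh τ)]
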